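/- Let v = (v₁, v₂, v₃) : ℝ³ → ℝ³ be a continuously differentiable vector field such that its symmetric gradient vanishes identically, i.e. ∂_i v_j + ∂_j v_i = 0 everywhere for all i, j ∈ {1,2,3}; suppose v is 2π-periodic in its first two variables, and v₃(x, y, 1) = 0 for all x, y. Then there exist constants A, B ∈ ℝ such that v(x, y, z) = (A, B, 0) for all (x, y, z). If moreover v₁(x₀, y₀, 1) = v₂(x₀, y₀, 1) = 0 for some point (x₀, y₀), then v ≡ 0. -/

import Mathlib

open Real

/-- Standard basis directions of ℝ × ℝ × ℝ. -/
noncomputable def basis3 : Fin 3 → ℝ × ℝ × ℝ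
  | 0 => (1, 0, 0)
  | 1 => (0, 1, 0)
  | 2 => (0, 0, 1)

/-- Partial derivative ∂ⱼ f of a scalar function on ℝ³. -/
noncomputable def pd (f : ℝ × ℝ × ℝ → ℝ) (j : Fin 3) (p : ℝ × ℝ × ℝ) : ℝ :=
  fderiv ℝ f p (basis3 j)

private lemma lineDeriv' (f : ℝ × ℝ × ℝ → ℝ) (hf : Differentiable ℝ f)
    (p e : ℝ × ℝ × ℝ) (t : ℝ) :
    HasDerivAt (fun s : ℝ => f (p + s • e)) (fderiv ℝ f (p + t • e) e) t := by
  have h1 : HasDerivAt (fun s : ℝ => p + s • e) e t := by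
    simpa using ((hasDerivAt_id t).smul_const e).const_add p
  exact (hf _).hasFDerivAt.comp_hasDerivAt t h1

private lemma const_dir (f : ℝ × ℝ × ℝ → ℝ) (hf : Differentiable ℝ f) (e : ℝ × ℝ × ℝ)
    (h : ∀ q, fderiv ℝ f q e = 0) (p : ℝ × ℝ × ℝ) (t : ℝ) :
    f (p + t • e) = f p := by
  have hd : ∀ s : ℝ, HasDerivAt (fun s : ℝ => f (p + s • e)) 0 s := fun s => by
    simpa [h] using lineDeriv' f hf p e s
  have := is_const_of_deriv_eq_zero (f := fun s : ℝ => f (p + s • e))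
    (fun s => (hd s).differentiableAt) (fun s => (hd s).deriv) t 0
  simpa using this

private lemma fderiv_dir_congr (f g : ℝ × ℝ × ℝ → ℝ) (hf : Differentiable ℝ f)
    (hg : Differentiable ℝ g) (p q e : ℝ × ℝ × ℝ)
    (hline : ∀ t : ℝ, f (p + t • e) = g (q + t • e)) :
    fderiv ℝ f p e = fderiv ℝ g q e := by
  have h1 := lineDeriv' f hf p e 0
  have h2 := lineDeriv' g hg q e 0
  rw [show (fun s : ℝ => f (p + s • e)) = (fun s : ℝ => g (q + s • e)) from funext hline] at h1
  simpa using h1.unique h2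

/-- A C¹ field with vanishing strain tensor, doubly 2π-periodic in (x,y) and with
third component vanishing at z = 1, is a constant horizontal field (A, B, 0);
if moreover its first two components vanish at some boundary point, it is zero. -/
theorem stmt_13 (v : Fin 3 → ℝ × ℝ × ℝ → ℝ)
    (hC1 : ∀ i, ContDiff ℝ 1 (v i))
    (hsym : ∀ (i j : Fin 3) (p : ℝ × ℝ × ℝ), pd (v j) i p + pd (v i) j p = 0)
    (hperx : ∀ i (x y z : ℝ), v i (x + 2 * π, y, z) = v i (x, y, z))
    (hpery : ∀ i (x y z : ℝ), v i (x, y + 2 * π, z) = v i (x, y, z))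
    (hbc : ∀ x y : ℝ, v 2 (x, y, 1) = 0) :
    (∃ A B : ℝ, ∀ p : ℝ × ℝ × ℝ, v 0 p = A ∧ v 1 p = B ∧ v 2 p = 0) ∧
    ((∃ x₀ y₀ : ℝ, v 0 (x₀, y₀, 1) = 0 ∧ v 1 (x₀, y₀, 1) = 0) →
      ∀ (i : Fin 3) (p : ℝ × ℝ × ℝ), v i p = 0) := by
  have hD : ∀ i, Differentiable ℝ (v i) := fun i => (hC1 i).differentiable one_ne_zero
  simp only [pd] at hsym
  -- diagonal entries vanish
  have hdiag : ∀ (i : Fin 3) p, fderiv ℝ (v i) p (basis3 i) = 0 := by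
    intro i p; have := hsym i i p; linarith
  -- v 2 ≡ 0
  have hv2 : ∀ p : ℝ × ℝ × ℝ, v 2 p = 0 := by
    rintro ⟨x, y, z⟩
    have h := const_dir (v 2) (hD 2) (basis3 2) (hdiag 2) (x, y, z) (1 - z)
    have hpt : ((x, y, z) : ℝ × ℝ × ℝ) + (1 - z) • basis3 2 = (x, y, 1) := by
      simp [basis3, Prod.ext_iff]
    rw [hpt, hbc] at h
    exact h.symm
  have hv2fun : v 2 = fun _ => (0 : ℝ) := funext hv2
  have hpd2 : ∀ (j : Fin 3) p, fderiv ℝ (v 2) p (basis3 j) = 0 := by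
    intro j p; rw [hv2fun]; simp
  -- derivatives of v0, v1 in direction e2 vanish
  have h02 : ∀ p, fderiv ℝ (v 0) p (basis3 2) = 0 := by
    intro p; have := hsym 2 0 p; have h2 := hpd2 0 p; linarith
  have h12 : ∀ p, fderiv ℝ (v 1) p (basis3 2) = 0 := by
    intro p; have := hsym 2 1 p; have h2 := hpd2 1 p; linarith
  have h00 : ∀ p, fderiv ℝ (v 0) p (basis3 0) = 0 := hdiag 0
  have h11 : ∀ p, fderiv ℝ (v 1) p (basis3 1) = 0 := hdiag 1
  -- v0 depends only on y; v1 only on x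
  have hv0dep : ∀ x y z : ℝ, v 0 (x, y, z) = v 0 (0, y, 0) := by
    intro x y z
    have e1 := const_dir (v 0) (hD 0) (basis3 0) h00 (0, y, z) x
    have e2 := const_dir (v 0) (hD 0) (basis3 2) h02 (0, y, 0) z
    have p1 : ((0, y, z) : ℝ × ℝ × ℝ) + x • basis3 0 = (x, y, z) := by
      simp [basis3, Prod.ext_iff]
    have p2 : ((0, y, 0) : ℝ × ℝ × ℝ) + z • basis3 2 = (0, y, z) := by
      simp [basis3, Prod.ext_iff]
    rw [p1] at e1; rw [p2] at e2; rw [e1, e2]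
  have hv1dep : ∀ x y z : ℝ, v 1 (x, y, z) = v 1 (x, 0, 0) := by
    intro x y z
    have e1 := const_dir (v 1) (hD 1) (basis3 1) h11 (x, 0, z) y
    have e2 := const_dir (v 1) (hD 1) (basis3 2) h12 (x, 0, 0) z
    have p1 : ((x, 0, z) : ℝ × ℝ × ℝ) + y • basis3 1 = (x, y, z) := by
      simp [basis3, Prod.ext_iff]
    have p2 : ((x, 0, 0) : ℝ × ℝ × ℝ) + z • basis3 2 = (x, 0, z) := by
      simp [basis3, Prod.ext_iff]
    rw [p1] at e1; rw [p2] at e2; rw [e1, e2]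
  -- the off-diagonal derivative is a constant c
  set c : ℝ := fderiv ℝ (v 0) (0, 0, 0) (basis3 1) with hc
  have hconst01 : ∀ x y z : ℝ, fderiv ℝ (v 0) (x, y, z) (basis3 1) = c := by
    intro x y z
    have stepA : fderiv ℝ (v 0) (x, y, z) (basis3 1) = fderiv ℝ (v 0) (0, y, 0) (basis3 1) := by
      apply fderiv_dir_congr (v 0) (v 0) (hD 0) (hD 0)
      intro t
      have q1 : ((x, y, z) : ℝ × ℝ × ℝ) + t • basis3 1 = (x, y + t, z) := by
        simp [basis3, Prod.ext_iff]
      have q2 : ((0, y, 0) : ℝ × ℝ × ℝ) + t • basis3 1 = (0, y + t, 0) := by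
        simp [basis3, Prod.ext_iff]
      rw [q1, q2, hv0dep]
    have stepB : fderiv ℝ (v 0) (0, y, 0) (basis3 1) = -fderiv ℝ (v 1) (0, y, 0) (basis3 0) := by
      have := hsym 1 0 (0, y, 0); linarith
    have stepC : fderiv ℝ (v 1) (0, y, 0) (basis3 0) = fderiv ℝ (v 1) (0, 0, 0) (basis3 0) := by
      apply fderiv_dir_congr (v 1) (v 1) (hD 1) (hD 1)
      intro t
      have q1 : ((0, y, 0) : ℝ × ℝ × ℝ) + t • basis3 0 = (t, y, 0) := by
        simp [basis3, Prod.ext_iff]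
      have q2 : ((0, 0, 0) : ℝ × ℝ × ℝ) + t • basis3 0 = (t, 0, 0) := by
        simp [basis3, Prod.ext_iff]
      rw [q1, q2, hv1dep]
    have stepD : fderiv ℝ (v 1) (0, 0, 0) (basis3 0) = -c := by
      have := hsym 1 0 (0, 0, 0); rw [hc]; linarith
    rw [stepA, stepB, stepC, stepD]; ring
  -- periodicity in y forces c = 0
  have hc0 : c = 0 := by
    have hder : ∀ s : ℝ, HasDerivAt (fun s : ℝ => v 0 (0, s, 0)) c s := by
      intro s
      have h := lineDeriv' (v 0) (hD 0) (0, 0, 0) (basis3 1) s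
      have q : ∀ t : ℝ, ((0, 0, 0) : ℝ × ℝ × ℝ) + t • basis3 1 = (0, t, 0) := by
        intro t; simp [basis3, Prod.ext_iff]
      rw [show (fun s : ℝ => v 0 ((0, 0, 0) + s • basis3 1)) = (fun s : ℝ => v 0 (0, s, 0))
        from funext fun t => by rw [q t]] at h
      rw [q s, hconst01] at h
      exact h
    have hg : ∀ s : ℝ, HasDerivAt (fun s : ℝ => v 0 (0, s, 0) - c * s) 0 s := by
      intro s
      exact ((hder s).sub ((hasDerivAt_id' s).const_mul c)).congr_deriv (by ring)
    have hconst := is_const_of_deriv_eq_zero (f := fun s : ℝ => v 0 (0, s, 0) - c * s)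
      (fun s => (hg s).differentiableAt) (fun s => (hg s).deriv) (2 * π) 0
    have hper : v 0 (0, 2 * π, 0) = v 0 (0, 0, 0) := by
      have := hpery 0 0 0 0; simpa using this
    rw [hper] at hconst
    have h2 : c * (2 * π) = 0 := by linarith
    rcases mul_eq_zero.mp h2 with h | h
    · exact h
    · exact absurd h (by positivity)
  -- hence ∂₀ v1 = 0 everywhere
  have hconst10 : ∀ x y z : ℝ, fderiv ℝ (v 1) (x, y, z) (basis3 0) = 0 := by
    intro x y z
    have stepA : fderiv ℝ (v 1) (x, y, z) (basis3 0) = fderiv ℝ (v 1) (x, 0, 0) (basis3 0) := by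
      apply fderiv_dir_congr (v 1) (v 1) (hD 1) (hD 1)
      intro t
      have q1 : ((x, y, z) : ℝ × ℝ × ℝ) + t • basis3 0 = (x + t, y, z) := by
        simp [basis3, Prod.ext_iff]
      have q2 : ((x, 0, 0) : ℝ × ℝ × ℝ) + t • basis3 0 = (x + t, 0, 0) := by
        simp [basis3, Prod.ext_iff]
      rw [q1, q2, hv1dep]
    have stepB : fderiv ℝ (v 1) (x, 0, 0) (basis3 0) = -fderiv ℝ (v 0) (x, 0, 0) (basis3 1) := by
      have := hsym 1 0 (x, 0, 0); linarith
    rw [stepA, stepB, hconst01, hc0, neg_zero]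
  have hconst01' : ∀ p : ℝ × ℝ × ℝ, fderiv ℝ (v 0) p (basis3 1) = 0 := by
    rintro ⟨x, y, z⟩; rw [hconst01, hc0]
  have hconst10' : ∀ p : ℝ × ℝ × ℝ, fderiv ℝ (v 1) p (basis3 0) = 0 := by
    rintro ⟨x, y, z⟩; exact hconst10 x y z
  -- v0 and v1 are globally constant
  have hv0const : ∀ p : ℝ × ℝ × ℝ, v 0 p = v 0 (0, 0, 0) := by
    rintro ⟨x, y, z⟩
    rw [hv0dep x y z]
    have e1 := const_dir (v 0) (hD 0) (basis3 1) hconst01' (0, 0, 0) y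
    have p1 : ((0, 0, 0) : ℝ × ℝ × ℝ) + y • basis3 1 = (0, y, 0) := by
      simp [basis3, Prod.ext_iff]
    rw [p1] at e1; exact e1
  have hv1const : ∀ p : ℝ × ℝ × ℝ, v 1 p = v 1 (0, 0, 0) := by
    rintro ⟨x, y, z⟩
    rw [hv1dep x y z]
    have e1 := const_dir (v 1) (hD 1) (basis3 0) hconst10' (0, 0, 0) x
    have p1 : ((0, 0, 0) : ℝ × ℝ × ℝ) + x • basis3 0 = (x, 0, 0) := by
      simp [basis3, Prod.ext_iff]
    rw [p1] at e1; exact e1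
  constructor
  · exact ⟨v 0 (0, 0, 0), v 1 (0, 0, 0), fun p => ⟨hv0const p, hv1const p, hv2 p⟩⟩
  · rintro ⟨x₀, y₀, h0, h1⟩ i p
    have hA : v 0 (0, 0, 0) = 0 := by rw [← hv0const (x₀, y₀, 1)]; exact h0
    have hB : v 1 (0, 0, 0) = 0 := by rw [← hv1const (x₀, y₀, 1)]; exact h1
    fin_cases i
    · exact (hv0const p).trans hA
    · exact (hv1const p).trans hB
    · exact hv2 p
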